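/- arXiv:1809.08996 — 3 statements merged into one kernel-verified Lean document; each statement's English description precedes it below -/
import Mathlib

section
/- The function ρ(x₁,…,xₙ) = Σ_{1≤r<s≤n} |x_r − x_s| on ℝⁿ (n ≥ 3) is a generalized n-metric on ℝ; in particular it satisfies the rectangle inequality ρ(x₁,x₂,…,xₙ) ≤ ρ(x₁,a,…,a) + ρ(a,x₂,…,xₙ) for all x₁,…,xₙ,a ∈ ℝ. -/
/-- A generalized `n`-metric on a set `X` (for `n ≥ 3`), following Khan. -/
structure IsGenNMetric {X : Type*} (n : ℕ) (hn : 3 ≤ n) (G : (Fin n → X) → ℝ) : Prop where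
  /-- values are nonnegative -/
  nonneg : ∀ x : Fin n → X, 0 ≤ G x
  /-- (G1) vanishing on constant tuples -/
  vanish : ∀ x : X, G (fun _ => x) = 0
  /-- (G2) positivity: `G(x₁,…,x₁,x₂) > 0` whenever `x₁ ≠ x₂` -/
  pos : ∀ x y : X, x ≠ y → 0 < G (fun i => if i.val = n - 1 then y else x)
  /-- (G3) `G(x₁,…,x₁,x₂) ≤ G(x₁,…,xₙ)` when at least two of `x₂,…,xₙ` are distinct -/
  le : ∀ x : Fin n → X,
    (∃ i j : Fin n, i ≠ ⟨0, by omega⟩ ∧ j ≠ ⟨0, by omega⟩ ∧ x i ≠ x j) →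
    G (fun i => if i.val = n - 1 then x ⟨1, by omega⟩ else x ⟨0, by omega⟩) ≤ G x
  /-- (G4) permutation invariance -/
  perm : ∀ (x : Fin n → X) (σ : Equiv.Perm (Fin n)), G (x ∘ σ) = G x
  /-- (G5) rectangle inequality: `G(x₁,…,xₙ) ≤ G(x₁,a,…,a) + G(a,x₂,…,xₙ)` -/
  rect : ∀ (x : Fin n → X) (a : X),
    G x ≤ G (fun i => if i.val = 0 then x ⟨0, by omega⟩ else a)
          + G (Function.update x ⟨0, by omega⟩ a)

open Finset in
private lemma half_sum {n : ℕ} (f : Fin n → Fin n → ℝ)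
    (hsymm : ∀ r s, f s r = f r s) (hdiag : ∀ r, f r r = 0) :
    2 * ∑ p ∈ Finset.univ.filter (fun p : Fin n × Fin n => p.1 < p.2), f p.1 p.2
      = ∑ r, ∑ s, f r s := by
  have hprod : ∑ r, ∑ s, f r s = ∑ p ∈ Finset.univ ×ˢ Finset.univ, f p.1 p.2 :=
    (Finset.sum_product _ _ (fun p : Fin n × Fin n => f p.1 p.2)).symm
  have huniv : (Finset.univ ×ˢ Finset.univ : Finset (Fin n × Fin n)) = Finset.univ := by
    simp
  have hsplit := Finset.sum_filter_add_sum_filter_not (Finset.univ : Finset (Fin n × Fin n))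
      (fun p : Fin n × Fin n => p.1 < p.2) (fun p => f p.1 p.2)
  have hnot : ∑ p ∈ Finset.univ.filter (fun p : Fin n × Fin n => ¬ p.1 < p.2), f p.1 p.2
      = ∑ p ∈ Finset.univ.filter (fun p : Fin n × Fin n => p.1 < p.2), f p.1 p.2 := by
    rw [show (Finset.univ.filter (fun p : Fin n × Fin n => ¬ p.1 < p.2))
        = (Finset.univ.filter (fun p : Fin n × Fin n => p.2 < p.1))
          ∪ (Finset.univ.filter (fun p : Fin n × Fin n => p.1 = p.2)) from ?_]
    · rw [Finset.sum_union ?_]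
      · have hdiagsum : ∑ p ∈ Finset.univ.filter (fun p : Fin n × Fin n => p.1 = p.2),
            f p.1 p.2 = 0 := by
          apply Finset.sum_eq_zero
          intro p hp
          simp only [Finset.mem_filter] at hp
          rw [hp.2, hdiag]
        rw [hdiagsum, add_zero]
        apply Finset.sum_nbij' (fun p => Prod.swap p) (fun p => Prod.swap p)
        · intro p hp; simp only [Finset.mem_filter] at *; exact ⟨Finset.mem_univ _, hp.2⟩
        · intro p hp; simp only [Finset.mem_filter] at *; exact ⟨Finset.mem_univ _, hp.2⟩
        · intro p _; simp
        · intro p _; simp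
        · intro p _; exact (hsymm p.1 p.2).symm
      · rw [Finset.disjoint_left]
        intro p hp hp'
        simp only [Finset.mem_filter] at *
        exact absurd hp'.2 (ne_of_gt hp.2)
    · ext p
      simp only [Finset.mem_filter, Finset.mem_union, Finset.mem_univ, true_and]
      constructor
      · intro h
        rcases lt_or_eq_of_le (le_of_not_gt h) with h' | h'
        · exact Or.inl h'
        · exact Or.inr h'.symm
      · rintro (h | h)
        · exact not_lt_of_gt h
        · rw [h]; exact lt_irrefl _
  rw [hprod, huniv, ← hsplit, hnot]
  ring

/-- `ρ(x₁,…,xₙ) = Σ_{r<s} |x_r − x_s|` is a generalized `n`-metric on `ℝ`;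
in particular it satisfies the rectangle inequality. -/
theorem stmt0 (n : ℕ) (hn : 3 ≤ n) :
    IsGenNMetric n hn
      (fun x : Fin n → ℝ =>
        ∑ p ∈ Finset.univ.filter (fun p : Fin n × Fin n => p.1 < p.2), |x p.1 - x p.2|) := by
  have hhalf : ∀ x : Fin n → ℝ,
      2 * ∑ p ∈ Finset.univ.filter (fun p : Fin n × Fin n => p.1 < p.2), |x p.1 - x p.2|
        = ∑ r, ∑ s, |x r - x s| := fun x =>
    half_sum (fun r s => |x r - x s|) (fun r s => abs_sub_comm _ _) (fun r => by simp)
  -- key lower bound for (G3)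
  have key : ∀ x : Fin n → ℝ, ∀ i j : Fin n, i ≠ j →
      (n : ℝ) * |x i - x j| + ((n : ℝ) - 2) * |x i - x j| ≤ ∑ r, ∑ s, |x r - x s| := by
    intro x i j hij
    set d := |x i - x j| with hd
    have htri : ∀ s : Fin n, d ≤ |x i - x s| + |x j - x s| := by
      intro s
      calc d ≤ |x i - x s| + |x s - x j| := abs_sub_le _ _ _
        _ = |x i - x s| + |x j - x s| := by rw [abs_sub_comm (x s)]
    have hpair : ({i, j} : Finset (Fin n)) ⊆ Finset.univ := Finset.subset_univ _
    rw [← Finset.sum_sdiff hpair]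
    have h1 : (n : ℝ) * d ≤ ∑ r ∈ ({i, j} : Finset (Fin n)), ∑ s, |x r - x s| := by
      rw [Finset.sum_pair hij]
      rw [← Finset.sum_add_distrib]
      calc (n : ℝ) * d = ∑ _s : Fin n, d := by
            rw [Finset.sum_const, Finset.card_univ, Fintype.card_fin, nsmul_eq_mul]
        _ ≤ ∑ s, (|x i - x s| + |x j - x s|) := Finset.sum_le_sum fun s _ => htri s
    have h2 : ((n : ℝ) - 2) * d ≤ ∑ r ∈ Finset.univ \ ({i, j} : Finset (Fin n)),
        ∑ s, |x r - x s| := by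
      have hcard : (Finset.univ \ ({i, j} : Finset (Fin n))).card = n - 2 := by
        rw [Finset.card_sdiff_of_subset hpair, Finset.card_pair hij, Finset.card_univ, Fintype.card_fin]
      have hrow : ∀ r : Fin n, d ≤ ∑ s, |x r - x s| := by
        intro r
        have hsub : ({i, j} : Finset (Fin n)) ⊆ Finset.univ := Finset.subset_univ _
        have : ∑ s ∈ ({i, j} : Finset (Fin n)), |x r - x s| ≤ ∑ s, |x r - x s| :=
          Finset.sum_le_sum_of_subset_of_nonneg hsub (fun _ _ _ => abs_nonneg _)
        refine le_trans ?_ this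
        rw [Finset.sum_pair hij]
        calc d ≤ |x i - x r| + |x j - x r| := htri r
          _ = |x r - x i| + |x r - x j| := by rw [abs_sub_comm (x i), abs_sub_comm (x j)]
      calc ((n : ℝ) - 2) * d = ∑ _r ∈ Finset.univ \ ({i, j} : Finset (Fin n)), d := by
            rw [Finset.sum_const, hcard, nsmul_eq_mul, Nat.cast_sub (by omega)]
            norm_num
        _ ≤ _ := Finset.sum_le_sum fun r _ => hrow r
      -- note: order of sum_sdiff is (sdiff) + (pair)
    linarith
  constructor
  · intro x
    exact Finset.sum_nonneg fun p _ => abs_nonneg _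
  · intro x
    simp
  · intro x y hxy
    apply Finset.sum_pos'
    · intro p _; exact abs_nonneg _
    · refine ⟨(⟨0, by omega⟩, ⟨n - 1, by omega⟩), ?_, ?_⟩
      · simp only [Finset.mem_filter, Finset.mem_univ, true_and]
        exact Fin.mk_lt_mk.mpr (by omega)
      · simp only
        rw [if_neg (by omega), if_pos trivial]
        exact abs_pos.mpr (sub_ne_zero.mpr hxy)
  · intro x _
    set e0 : Fin n := ⟨0, by omega⟩
    set e1 : Fin n := ⟨1, by omega⟩
    set c : Fin n → ℝ := fun i => if i.val = n - 1 then x e1 else x e0 with hc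
    set d := |x e0 - x e1| with hd
    have hd0 : 0 ≤ d := abs_nonneg _
    have h2 : (0:ℝ) < 2 := two_pos
    rw [← mul_le_mul_iff_right₀ h2, hhalf c, hhalf x]
    have e01 : e0 ≠ e1 := by simp [e0, e1, Fin.ext_iff]
    -- compute LHS
    have hlast : (⟨n - 1, by omega⟩ : Fin n) ∈ (Finset.univ : Finset (Fin n)) := Finset.mem_univ _
    set en : Fin n := ⟨n - 1, by omega⟩ with hen
    have hinner : ∀ r : Fin n, ∑ s, |c r - c s|
        = if r = en then ((n:ℝ) - 1) * d else d := by
      intro r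
      by_cases hr : r = en
      · rw [if_pos hr]
        have hterm : ∀ s : Fin n, |c r - c s| = if s = en then 0 else d := by
          intro s
          simp only [hc]
          rw [if_pos (show (r:ℕ) = n - 1 from by rw [hr])]
          by_cases hs : s = en
          · rw [if_pos (show (s:ℕ) = n - 1 from by rw [hs]), if_pos hs, sub_self, abs_zero]
          · rw [if_neg (show ¬ (s:ℕ) = n - 1 from fun h => hs (Fin.ext h)), if_neg hs, hd,
              abs_sub_comm]
        calc ∑ s, |c r - c s| = ∑ s : Fin n, (if s = en then (0:ℝ) else d) :=
              Finset.sum_congr rfl fun s _ => hterm s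
          _ = ∑ s ∈ Finset.univ.filter (fun s : Fin n => s = en), (0:ℝ)
              + ∑ s ∈ Finset.univ.filter (fun s : Fin n => ¬ s = en), d := Finset.sum_ite _ _
          _ = ((n:ℝ) - 1) * d := by
              rw [Finset.sum_const_zero, zero_add, Finset.sum_const,
                show (Finset.univ.filter (fun s : Fin n => ¬ s = en)) = Finset.univ.erase en from
                  by ext s; simp [Finset.mem_erase, and_comm],
                Finset.card_erase_of_mem (Finset.mem_univ _), Finset.card_univ, Fintype.card_fin,
                nsmul_eq_mul, Nat.cast_sub (by omega)]
              norm_num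
      · rw [if_neg hr]
        have hterm : ∀ s : Fin n, |c r - c s| = if s = en then d else 0 := by
          intro s
          simp only [hc]
          rw [if_neg (show ¬ (r:ℕ) = n - 1 from fun h => hr (Fin.ext h))]
          by_cases hs : s = en
          · rw [if_pos (show (s:ℕ) = n - 1 from by rw [hs]), if_pos hs]
          · rw [if_neg (show ¬ (s:ℕ) = n - 1 from fun h => hs (Fin.ext h)), if_neg hs,
              sub_self, abs_zero]
        calc ∑ s, |c r - c s| = ∑ s : Fin n, (if s = en then d else (0:ℝ)) :=
              Finset.sum_congr rfl fun s _ => hterm s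
          _ = d := by
              rw [Finset.sum_ite_eq' Finset.univ en (fun _ => d), if_pos (Finset.mem_univ _)]
    have hLHS : ∑ r, ∑ s, |c r - c s| = 2 * ((n:ℝ) - 1) * d := by
      calc ∑ r, ∑ s, |c r - c s|
          = ∑ r : Fin n, (if r = en then ((n:ℝ) - 1) * d else d) :=
            Finset.sum_congr rfl fun r _ => hinner r
        _ = ∑ r ∈ Finset.univ.filter (fun r : Fin n => r = en), ((n:ℝ) - 1) * d
            + ∑ r ∈ Finset.univ.filter (fun r : Fin n => ¬ r = en), d := Finset.sum_ite _ _
        _ = 2 * ((n:ℝ) - 1) * d := by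
            rw [show (Finset.univ.filter (fun r : Fin n => r = en)) = {en} from
                  by ext r; simp,
              show (Finset.univ.filter (fun r : Fin n => ¬ r = en)) = Finset.univ.erase en from
                  by ext r; simp [Finset.mem_erase, and_comm],
              Finset.sum_singleton, Finset.sum_const,
              Finset.card_erase_of_mem (Finset.mem_univ _), Finset.card_univ, Fintype.card_fin,
              nsmul_eq_mul, Nat.cast_sub (by omega)]
            push_cast
            ring
    rw [hLHS]
    have hkey := key x e0 e1 e01
    rw [← hd] at hkey
    linarith
  · intro x σ
    have h := hhalf (x ∘ σ)
    rw [show ∑ r, ∑ s, |(x ∘ σ) r - (x ∘ σ) s| = ∑ r, ∑ s, |x r - x s| from ?_] at h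
    · have h' := hhalf x
      have := h.trans h'.symm
      exact mul_left_cancel₀ (two_ne_zero) this
    · calc ∑ r, ∑ s, |x (σ r) - x (σ s)|
          = ∑ r, ∑ s, |x (σ r) - x s| :=
            Finset.sum_congr rfl fun r _ => Equiv.sum_comp σ (fun s => |x (σ r) - x s|)
        _ = ∑ r, ∑ s, |x r - x s| := Equiv.sum_comp σ (fun r => ∑ s, |x r - x s|)
  · intro x a
    rw [← Finset.sum_add_distrib]
    apply Finset.sum_le_sum
    intro p hp
    simp only [Finset.mem_filter, Finset.mem_univ, true_and] at hp
    beta_reduce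
    set e0 : Fin n := ⟨0, by omega⟩
    by_cases h1 : p.1.val = 0
    · have hp1 : p.1 = e0 := Fin.ext h1
      have hp2 : p.2 ≠ e0 := by
        intro h
        rw [hp1, h] at hp
        exact lt_irrefl _ hp
      have h2v : ¬ p.2.val = 0 := by
        intro h
        exact hp2 (Fin.ext h)
      rw [if_pos h1, if_neg h2v, hp1, Function.update_self, Function.update_of_ne hp2]
      exact abs_sub_le _ _ _
    · have hp1 : p.1 ≠ e0 := fun h => h1 (by rw [h])
      have h2v : ¬ p.2.val = 0 := by
        have := hp
        rw [Fin.lt_def] at this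
        omega
      have hp2 : p.2 ≠ e0 := fun h => h2v (by rw [h])
      rw [if_neg h1, if_neg h2v, Function.update_of_ne hp1, Function.update_of_ne hp2,
        sub_self, abs_zero, zero_add]
end

section
/- Let (X,M,*) be a fuzzy metric space (in the sense of George–Veeramani) with * the product t-norm, and define F₃(x,y,z,t) = M(x,y,t)·M(x,z,t)·M(y,z,t). Then F₃ satisfies the tetrahedral inequality F₃(x,y,z,t+s) ≥ F₃(x,w,w,t)·F₃(w,y,z,s) for all x,y,z,w ∈ X and t,s > 0. -/
/-- A fuzzy metric space in the sense of George and Veeramani: `star` is a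
continuous t-norm and `M : X × X × (0,∞) → [0,1]` satisfies (FM1)–(FM5). -/
structure IsFuzzyMetric {X : Type*} (star : ℝ → ℝ → ℝ) (M : X → X → ℝ → ℝ) : Prop where
  /-- values lie in `[0,1]` -/
  mem : ∀ (x y : X) (t : ℝ), 0 < t → M x y t ∈ Set.Icc (0:ℝ) 1
  /-- (FM1) positivity -/
  pos : ∀ (x y : X) (t : ℝ), 0 < t → 0 < M x y t
  /-- (FM2) `M(x,y,t) = 1` iff `x = y` -/
  eq_one_iff : ∀ (x y : X) (t : ℝ), 0 < t → (M x y t = 1 ↔ x = y)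
  /-- (FM3) symmetry -/
  symm : ∀ (x y : X) (t : ℝ), 0 < t → M x y t = M y x t
  /-- (FM4) triangle inequality -/
  tri : ∀ (x y z : X) (t s : ℝ), 0 < t → 0 < s → star (M x y t) (M y z s) ≤ M x z (t + s)
  /-- (FM5) continuity in `t` on `(0,∞)` -/
  cont : ∀ x y : X, ContinuousOn (M x y) (Set.Ioi 0)

/-- for a fuzzy metric space `(X,M,·)` with the product t-norm and
`F₃(x,y,z,t) = M(x,y,t)·M(x,z,t)·M(y,z,t)`, the tetrahedral inequality
`F₃(x,y,z,t+s) ≥ F₃(x,w,w,t)·F₃(w,y,z,s)` holds. -/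
theorem stmt10 {X : Type*} (M : X → X → ℝ → ℝ)
    (hM : IsFuzzyMetric (fun a b => a * b) M)
    (hmono : ∀ (x y : X) (t s : ℝ), 0 < t → t ≤ s → M x y t ≤ M x y s)
    (x y z w : X) (t s : ℝ) (ht : 0 < t) (hs : 0 < s) :
    (M x w t * M x w t * M w w t) * (M w y s * M w z s * M y z s)
      ≤ M x y (t + s) * M x z (t + s) * M y z (t + s) := by
  have nn : ∀ (a b : X) (r : ℝ), 0 < r → 0 ≤ M a b r := fun a b r hr => (hM.pos a b r hr).le
  have le1 : ∀ (a b : X) (r : ℝ), 0 < r → M a b r ≤ 1 := fun a b r hr => (hM.mem a b r hr).2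
  have h1 : M x w t * M w y s ≤ M x y (t + s) := hM.tri x w y t s ht hs
  have h2 : M x w t * M w z s ≤ M x z (t + s) := hM.tri x w z t s ht hs
  have h3 : M y z s ≤ M y z (t + s) := hmono y z s (t + s) hs (by linarith)
  calc (M x w t * M x w t * M w w t) * (M w y s * M w z s * M y z s)
      ≤ (M x w t * M x w t * 1) * (M w y s * M w z s * M y z s) := by
        apply mul_le_mul_of_nonneg_right
        · exact mul_le_mul_of_nonneg_left (le1 w w t ht)
            (mul_nonneg (nn x w t ht) (nn x w t ht))
        · exact mul_nonneg (mul_nonneg (nn w y s hs) (nn w z s hs)) (nn y z s hs)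
    _ = (M x w t * M w y s) * (M x w t * M w z s) * M y z s := by ring
    _ ≤ M x y (t + s) * M x z (t + s) * M y z (t + s) := by
        have hts : (0:ℝ) < t + s := by linarith
        apply mul_le_mul _ h3 (nn y z s hs)
          (mul_nonneg (nn x y _ hts) (nn x z _ hts))
        exact mul_le_mul h1 h2 (mul_nonneg (nn x w t ht) (nn w z s hs)) (nn x y _ hts)
end

section
/- Let X = [a,b] with K > |a| > 0 and define M(x,y) = ∏_{l=1}^{3} (min{x(l),y(l)}+K)/(max{x(l),y(l)}+K) for x,y ∈ X³. Then M is a stationary fuzzy metric on X³ with the product t-norm: M(x,y) ∈ (0,1], M(x,y)=1 iff x=y, M(x,y)=M(y,x), and M(x,z) ≥ M(x,y)·M(y,z). -/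
/-- The Morillas fuzzy metric on RGB-type vectors in `[a,b]³`:
`M(x,y) = ∏_{l=1}^{3} (min{x(l),y(l)}+K)/(max{x(l),y(l)}+K)`. -/
noncomputable def morillasM (K : ℝ) (x y : Fin 3 → ℝ) : ℝ :=
  ∏ l : Fin 3, (min (x l) (y l) + K) / (max (x l) (y l) + K)

lemma ratio_pos {p q : ℝ} (hp : 0 < p) (hq : 0 < q) :
    0 < min p q / max p q := div_pos (lt_min hp hq) (lt_max_of_lt_left hp)

lemma ratio_le_one {p q : ℝ} (hp : 0 < p) : min p q / max p q ≤ 1 :=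
  div_le_one_of_le₀ (min_le_max) (le_of_lt (lt_max_of_lt_left hp))

lemma ratio_tri {p q r : ℝ} (hp : 0 < p) (hq : 0 < q) (hr : 0 < r) :
    min p q / max p q * (min q r / max q r) ≤ min p r / max p r := by
  rcases le_total p q with h1 | h1 <;> rcases le_total q r with h2 | h2 <;>
    rcases le_total p r with h3 | h3 <;>
    simp only [min_eq_left, min_eq_right, max_eq_left, max_eq_right, h1, h2, h3] <;>
    rw [div_mul_div_comm, div_le_div_iff₀ (by positivity) (by positivity)] <;>
    nlinarith [mul_pos hp hq, mul_pos hq hr, mul_pos hp hr]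

/-- for `X = [a,b]` with `K > |a| > 0`, the Morillas function `M` is a
stationary fuzzy metric on `X³` with the product t-norm: `M(x,y) ∈ (0,1]`,
`M(x,y) = 1` iff `x = y`, `M` is symmetric, and `M(x,z) ≥ M(x,y)·M(y,z)`. -/
theorem stmt15 (a b K : ℝ) (haK : |a| < K) (ha : 0 < |a|)
    (x y z : Fin 3 → ℝ)
    (hx : ∀ l, x l ∈ Set.Icc a b) (hy : ∀ l, y l ∈ Set.Icc a b)
    (hz : ∀ l, z l ∈ Set.Icc a b) :
    (0 < morillasM K x y ∧ morillasM K x y ≤ 1) ∧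
    (morillasM K x y = 1 ↔ x = y) ∧
    morillasM K x y = morillasM K y x ∧
    morillasM K x y * morillasM K y z ≤ morillasM K x z := by
  have key : ∀ t : ℝ, t ∈ Set.Icc a b → 0 < t + K := by
    intro t ht
    have := neg_abs_le a
    linarith [ht.1]
  have hxK : ∀ l, 0 < x l + K := fun l => key _ (hx l)
  have hyK : ∀ l, 0 < y l + K := fun l => key _ (hy l)
  have hzK : ∀ l, 0 < z l + K := fun l => key _ (hz l)
  have hmm : ∀ (u v : Fin 3 → ℝ) (l : Fin 3),
      (min (u l) (v l) + K) / (max (u l) (v l) + K)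
        = min (u l + K) (v l + K) / max (u l + K) (v l + K) := by
    intro u v l
    rw [← min_add_add_right, ← max_add_add_right]
  have hposf : ∀ l : Fin 3, 0 < (min (x l) (y l) + K) / (max (x l) (y l) + K) := by
    intro l; rw [hmm]; exact ratio_pos (hxK l) (hyK l)
  have hle1f : ∀ l : Fin 3, (min (x l) (y l) + K) / (max (x l) (y l) + K) ≤ 1 := by
    intro l; rw [hmm]; exact ratio_le_one (hxK l)
  have hpos : 0 < morillasM K x y := Finset.prod_pos fun l _ => hposf l
  have hle1 : morillasM K x y ≤ 1 := by
    calc morillasM K x y ≤ ∏ _l : Fin 3, 1 :=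
          Finset.prod_le_prod (fun l _ => (hposf l).le) (fun l _ => hle1f l)
      _ = 1 := by simp
  refine ⟨⟨hpos, hle1⟩, ?_, ?_, ?_⟩
  · constructor
    · intro h
      have hexp : (min (x 0) (y 0) + K) / (max (x 0) (y 0) + K) *
          ((min (x 1) (y 1) + K) / (max (x 1) (y 1) + K)) *
          ((min (x 2) (y 2) + K) / (max (x 2) (y 2) + K)) = 1 := by
        rw [← h]; unfold morillasM; rw [Fin.prod_univ_three]
      have e0 : (min (x 0) (y 0) + K) / (max (x 0) (y 0) + K) = 1 := by
        nlinarith [hposf 0, hposf 1, hposf 2, hle1f 0, hle1f 1, hle1f 2,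
          mul_pos (hposf 0) (hposf 1), mul_pos (hposf 1) (hposf 2), mul_pos (hposf 0) (hposf 2)]
      have e1 : (min (x 1) (y 1) + K) / (max (x 1) (y 1) + K) = 1 := by
        nlinarith [hposf 0, hposf 1, hposf 2, hle1f 0, hle1f 1, hle1f 2,
          mul_pos (hposf 0) (hposf 1), mul_pos (hposf 1) (hposf 2), mul_pos (hposf 0) (hposf 2)]
      have e2 : (min (x 2) (y 2) + K) / (max (x 2) (y 2) + K) = 1 := by
        nlinarith [hposf 0, hposf 1, hposf 2, hle1f 0, hle1f 1, hle1f 2,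
          mul_pos (hposf 0) (hposf 1), mul_pos (hposf 1) (hposf 2), mul_pos (hposf 0) (hposf 2)]
      have coord : ∀ j : Fin 3, (min (x j) (y j) + K) / (max (x j) (y j) + K) = 1 → x j = y j := by
        intro j hj
        have hd' : max (x j) (y j) + K ≠ 0 := by
          have h0 : 0 < max (x j) (y j) + K := by
            have := hxK j
            have := le_max_left (x j) (y j)
            linarith
          exact h0.ne' 
        rw [div_eq_one_iff_eq hd'] at hj
        rcases le_total (x j) (y j) with h' | h' <;>
          simp only [min_eq_left h', min_eq_right h', max_eq_left h', max_eq_right h'] at hj <;>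
          linarith
      funext l
      fin_cases l
      · exact coord 0 e0
      · exact coord 1 e1
      · exact coord 2 e2
    · intro h; subst h; unfold morillasM
      rw [Finset.prod_eq_one]
      intro l _
      rw [min_self, max_self, div_self (hxK l).ne']
  · unfold morillasM
    exact Finset.prod_congr rfl fun l _ => by rw [min_comm, max_comm]
  · unfold morillasM
    rw [← Finset.prod_mul_distrib]
    refine Finset.prod_le_prod (fun l _ => ?_) (fun l _ => ?_)
    · have h1 := hposf l
      have h2 : 0 < (min (y l) (z l) + K) / (max (y l) (z l) + K) := by
        rw [hmm]; exact ratio_pos (hyK l) (hzK l)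
      positivity
    · rw [hmm, hmm, hmm]
      exact ratio_tri (hxK l) (hyK l) (hzK l)
end
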